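/- Let E be a nonzero real normed space, a, b ∈ ℝ with b ≠ 0, and suppose either (-1 < a < 0 and b < 0) or (a < -1 and b > 0). Then the set of solutions X ∈ E of (1 + a·exp(-‖X‖/b)) • X = 0 is exactly {0} ∪ {X ∈ E : ‖X‖ = b·ln|a|}; in particular, if X̃ ∈ E with ‖X̃‖ = 1, then 0, b·ln|a|·X̃ and -b·ln|a|·X̃ are three distinct solutions. -/

import Mathlib

open Real

theorem stmt_17 {E : Type*} [NormedAddCommGroup E] [NormedSpace ℝ E]
    (hE : ∃ v : E, v ≠ 0) (a b : ℝ) (hb : b ≠ 0)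
    (h : (-1 < a ∧ a < 0 ∧ b < 0) ∨ (a < -1 ∧ 0 < b)) :
    {X : E | (1 + a * Real.exp (-‖X‖ / b)) • X = 0} =
      {0} ∪ {X : E | ‖X‖ = b * Real.log |a|} ∧
    ∀ Xt : E, ‖Xt‖ = 1 →
      ((1 + a * Real.exp (-‖(0 : E)‖ / b)) • (0 : E) = 0 ∧
       (1 + a * Real.exp (-‖(b * Real.log |a|) • Xt‖ / b)) • ((b * Real.log |a|) • Xt) = 0 ∧
       (1 + a * Real.exp (-‖(-(b * Real.log |a|)) • Xt‖ / b)) • ((-(b * Real.log |a|)) • Xt) = 0) ∧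
      (0 : E) ≠ (b * Real.log |a|) • Xt ∧
      (0 : E) ≠ (-(b * Real.log |a|)) • Xt ∧
      (b * Real.log |a|) • Xt ≠ (-(b * Real.log |a|)) • Xt := by
  have ha : a < 0 := by rcases h with ⟨_, h2, _⟩ | ⟨h1, _⟩ <;> linarith
  have hna : (0 : ℝ) < -a := by linarith
  have ha0 : a ≠ 0 := ne_of_lt ha
  have hL : 0 < b * Real.log |a| := by
    rcases h with ⟨h1, h2, h3⟩ | ⟨h1, h2⟩
    · have habs : |a| = -a := abs_of_neg h2
      have : Real.log |a| < 0 := by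
        rw [habs]; exact Real.log_neg (by linarith) (by linarith)
      exact mul_pos_of_neg_of_neg h3 this
    · have habs : |a| = -a := abs_of_neg ha
      have : 0 < Real.log |a| := by
        rw [habs]; exact Real.log_pos (by linarith)
      exact mul_pos h2 this
  set L := b * Real.log |a| with hLdef
  have key : ∀ t : ℝ, (1 + a * Real.exp (-t / b)) = 0 ↔ t = L := by
    intro t
    constructor
    · intro ht
      have he : Real.exp (-t / b) = (-a)⁻¹ := by
        field_simp
        rw [neg_div] at ht; linarith
      have hlog := congrArg Real.log he
      rw [Real.log_exp, Real.log_inv, Real.log_neg_eq_log] at hlog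
      rw [hLdef, Real.log_abs]
      field_simp at hlog
      linarith
    · intro ht
      subst ht
      have h1 : -L / b = -Real.log |a| := by
        rw [hLdef]; field_simp
      rw [h1, Real.exp_neg, Real.exp_log (abs_pos.mpr ha0), abs_of_neg ha]
      field_simp; norm_num
  have hsets : {X : E | (1 + a * Real.exp (-‖X‖ / b)) • X = 0} =
      {0} ∪ {X : E | ‖X‖ = L} := by
    ext X
    simp only [Set.mem_setOf_eq, Set.mem_union, Set.mem_singleton_iff, smul_eq_zero,
      key ‖X‖]
    tauto
  refine ⟨hsets, fun Xt hXt => ?_⟩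
  have hXt0 : Xt ≠ 0 := by
    intro h0; rw [h0, norm_zero] at hXt; norm_num at hXt
  have hLne : L ≠ 0 := ne_of_gt hL
  have hn1 : ‖L • Xt‖ = L := by
    rw [norm_smul, hXt, Real.norm_eq_abs, abs_of_pos hL, mul_one]
  have hn2 : ‖(-L) • Xt‖ = L := by
    rw [norm_smul, hXt, Real.norm_eq_abs, abs_neg, abs_of_pos hL, mul_one]
  refine ⟨⟨smul_zero _, ?_, ?_⟩, ?_, ?_, ?_⟩
  · rw [hn1, (key L).mpr rfl, zero_smul]
  · rw [hn2, (key L).mpr rfl, zero_smul]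
  · intro hc
    exact (smul_ne_zero hLne hXt0) hc.symm
  · intro hc
    exact (smul_ne_zero (neg_ne_zero.mpr hLne) hXt0) hc.symm
  · intro hc
    have : (L - (-L)) • Xt = 0 := by rw [sub_smul, hc, sub_self]
    rcases smul_eq_zero.mp this with h' | h'
    · exact hLne (by linarith)
    · exact hXt0 h'
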